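/- Let N be a prime, let P, Q ∈ ℤ[x] be polynomials with P(0) = Q(0) = 0, let f₁, g₁ : ℤ/Nℤ → ℂ be one-bounded, let K : ℤ/Nℤ → ℂ be one-bounded, and let α ∈ (1/N)ℤ/ℤ. Then |𝔼_{x,y} f₁(x) g₁(x+P(y)) e(αQ(y)) K(y)| ≤ max_{β∈(1/N)ℤ/ℤ} |𝔼_y e(αQ(y) + βP(y)) K(y)|. -/

import Mathlib

open Finset

noncomputable section

/-- Evaluation of an integer polynomial at an element of `ZMod N`. -/
def pEvalZ {N : ℕ} (P : Polynomial ℤ) (y : ZMod N) : ZMod N :=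
  Polynomial.eval₂ (Int.castRingHom (ZMod N)) y P

/-- `e(x/N)` for `x : ZMod N`: the additive character `x ↦ e^{2πi x/N}`.
For `α = a/N ∈ (1/N)ℤ/ℤ` and `x : ZMod N`, `e(αx) = eN (a*x)`. -/
def eN {N : ℕ} [NeZero N] (x : ZMod N) : ℂ :=
  Complex.exp (2 * Real.pi * Complex.I * (x.val : ℂ) / (N : ℂ))

namespace StmtAux18

variable {N : ℕ} [NeZero N]

lemma eN_eq (x : ZMod N) : eN x = ZMod.stdAddChar x := by
  rw [ZMod.stdAddChar_apply, ZMod.toCircle_apply, eN]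

lemma eN_zero : eN (0 : ZMod N) = 1 := by
  simp [eN, ZMod.val_zero]

lemma eN_add (x y : ZMod N) : eN (x + y) = eN x * eN y := by
  simp [eN_eq, AddChar.map_add_eq_mul]

lemma eN_ne_zero (x : ZMod N) : eN x ≠ 0 := Complex.exp_ne_zero _

lemma abs_eN (x : ZMod N) : ‖eN x‖ = 1 := by
  have : eN x = Complex.exp (((2 * Real.pi * x.val / N : ℝ) : ℂ) * Complex.I) := by
    rw [eN]; push_cast; ring_nf
  rw [this, Complex.norm_exp_ofReal_mul_I]

lemma eN_conj (x : ZMod N) : (starRingEnd ℂ) (eN x) = eN (-x) := by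
  have h1 : eN (-x) * eN x = 1 := by rw [← eN_add]; simp [eN_zero]
  have h2 : (starRingEnd ℂ) (eN x) * eN x = 1 := by
    rw [mul_comm, Complex.mul_conj, Complex.normSq_eq_norm_sq, abs_eN]; norm_num
  exact mul_right_cancel₀ (eN_ne_zero x) (h2.trans h1.symm)

lemma sum_eN_mul (z : ZMod N) :
    ∑ b : ZMod N, eN (b * z) = if z = 0 then (N : ℂ) else 0 := by
  classical
  have h : ∀ b : ZMod N, eN (b * z) = ((ZMod.stdAddChar (N := N)).mulShift z) b := by
    intro b; rw [AddChar.mulShift_apply, eN_eq, mul_comm]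
  simp_rw [h]
  rw [AddChar.sum_eq_ite]
  rcases eq_or_ne z 0 with hz | hz
  · simp [hz, AddChar.mulShift_zero, AddChar.one_eq_zero, ZMod.card]
  · have h1 : (ZMod.stdAddChar (N := N)).mulShift z ≠ 1 :=
      ZMod.isPrimitive_stdAddChar N hz
    rw [AddChar.one_eq_zero] at h1
    simp [hz, h1]

lemma parseval (f : ZMod N → ℂ) :
    ∑ b : ZMod N, ‖∑ x : ZMod N, f x * eN (b * x)‖ ^ 2
      = N * ∑ x : ZMod N, ‖f x‖ ^ 2 := by
  classical
  have key : ∑ b : ZMod N, (∑ x : ZMod N, f x * eN (b * x)) *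
      (starRingEnd ℂ) (∑ x : ZMod N, f x * eN (b * x))
      = (N : ℂ) * ∑ x : ZMod N, f x * (starRingEnd ℂ) (f x) := by
    have step1 : ∀ b : ZMod N, (∑ x : ZMod N, f x * eN (b * x)) *
        (starRingEnd ℂ) (∑ x : ZMod N, f x * eN (b * x))
        = ∑ x : ZMod N, ∑ z : ZMod N,
            f x * (starRingEnd ℂ) (f z) * eN (b * (x - z)) := by
      intro b
      rw [map_sum, Finset.sum_mul_sum]
      refine Finset.sum_congr rfl fun x _ => Finset.sum_congr rfl fun z _ => ?_
      rw [map_mul, eN_conj]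
      have : eN (b * x) * eN (-(b * z)) = eN (b * (x - z)) := by
        rw [← eN_add]; ring_nf
      calc f x * eN (b * x) * ((starRingEnd ℂ) (f z) * eN (-(b * z)))
          = f x * (starRingEnd ℂ) (f z) * (eN (b * x) * eN (-(b * z))) := by ring
        _ = _ := by rw [this]
    simp_rw [step1]
    rw [Finset.sum_comm]
    have : ∀ x : ZMod N, ∑ b : ZMod N, ∑ z : ZMod N,
        f x * (starRingEnd ℂ) (f z) * eN (b * (x - z))
        = (N : ℂ) * (f x * (starRingEnd ℂ) (f x)) := by
      intro x
      rw [Finset.sum_comm]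
      have : ∀ z : ZMod N, ∑ b : ZMod N, f x * (starRingEnd ℂ) (f z) * eN (b * (x - z))
          = f x * (starRingEnd ℂ) (f z) * (if x - z = 0 then (N : ℂ) else 0) := by
        intro z; rw [← Finset.mul_sum, sum_eN_mul]
      simp_rw [this]
      have hiff : ∀ z : ZMod N, (x - z = 0) = (z = x) := by
        intro z; rw [sub_eq_zero]; exact propext eq_comm
      simp_rw [hiff, mul_ite, mul_zero]
      rw [Finset.sum_ite_eq' Finset.univ x]
      simp [mul_comm]
    simp_rw [this, ← Finset.mul_sum]
  have lhs_cast : ((∑ b : ZMod N, ‖∑ x : ZMod N, f x * eN (b * x)‖ ^ 2 : ℝ) : ℂ)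
      = ∑ b : ZMod N, (∑ x : ZMod N, f x * eN (b * x)) *
        (starRingEnd ℂ) (∑ x : ZMod N, f x * eN (b * x)) := by
    push_cast
    refine Finset.sum_congr rfl fun b _ => ?_
    rw [Complex.mul_conj, Complex.normSq_eq_norm_sq]
    push_cast; ring
  have rhs_cast : ((N * ∑ x : ZMod N, ‖f x‖ ^ 2 : ℝ) : ℂ)
      = (N : ℂ) * ∑ x : ZMod N, f x * (starRingEnd ℂ) (f x) := by
    push_cast
    rw [Finset.mul_sum, Finset.mul_sum]
    refine Finset.sum_congr rfl fun x _ => ?_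
    rw [Complex.mul_conj, Complex.normSq_eq_norm_sq]
    push_cast; ring
  have := lhs_cast.trans (key.trans rhs_cast.symm)
  exact_mod_cast this

lemma parseval_le (f : ZMod N → ℂ) (hf : ∀ x, ‖f x‖ ≤ 1) :
    ∑ b : ZMod N, ‖∑ x : ZMod N, f x * eN (b * x)‖ ^ 2 ≤ (N : ℝ) ^ 2 := by
  rw [parseval]
  have : ∑ x : ZMod N, ‖f x‖ ^ 2 ≤ (N : ℝ) := by
    calc ∑ x : ZMod N, ‖f x‖ ^ 2 ≤ ∑ _x : ZMod N, (1 : ℝ) := by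
          refine Finset.sum_le_sum fun x _ => ?_
          nlinarith [hf x, norm_nonneg (f x)]
      _ = (N : ℝ) := by simp [ZMod.card]
  nlinarith [Nat.cast_nonneg (α := ℝ) N]

end StmtAux18

open StmtAux18 in
theorem stmt18 (N : ℕ) [NeZero N] (hN : Nat.Prime N)
    (P Q : Polynomial ℤ) (hP0 : P.eval 0 = 0) (hQ0 : Q.eval 0 = 0)
    (f₁ g₁ K : ZMod N → ℂ)
    (hf₁ : ∀ x, ‖f₁ x‖ ≤ 1) (hg₁ : ∀ x, ‖g₁ x‖ ≤ 1)
    (hK : ∀ y, ‖K y‖ ≤ 1) (a : ZMod N) :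
    ‖(∑ x : ZMod N, ∑ y : ZMod N,
        f₁ x * g₁ (x + pEvalZ P y) * eN (a * pEvalZ Q y) * K y) / (N : ℂ) ^ 2‖ ≤
      ⨆ b : ZMod N,
        ‖(∑ y : ZMod N,
          eN (a * pEvalZ Q y + b * pEvalZ P y) * K y) / (N : ℂ)‖ := by
  classical
  set F : ZMod N → ℂ := fun b => ∑ x : ZMod N, f₁ x * eN (b * x) with hF
  set G : ZMod N → ℂ := fun b => ∑ z : ZMod N, g₁ z * eN (-(b * z)) with hG
  set T : ZMod N → ℂ := fun b => ∑ y : ZMod N, eN (a * pEvalZ Q y + b * pEvalZ P y) * K y with hT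
  set S : ℂ := ∑ x : ZMod N, ∑ y : ZMod N,
      f₁ x * g₁ (x + pEvalZ P y) * eN (a * pEvalZ Q y) * K y with hS
  have hNR : (0 : ℝ) < (N : ℝ) := by exact_mod_cast Nat.pos_of_ne_zero (NeZero.ne N)
  have hNC : (N : ℂ) ≠ 0 := Nat.cast_ne_zero.mpr (NeZero.ne N)
  -- key identity
  have key : ∑ b : ZMod N, F b * G b * T b = (N : ℂ) * S := by
    have step1 : ∀ b : ZMod N, F b * G b * T b
        = ∑ x : ZMod N, ∑ z : ZMod N, ∑ y : ZMod N,
            (f₁ x * g₁ z * eN (a * pEvalZ Q y) * K y) * eN (b * (x - z + pEvalZ P y)) := by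
      intro b
      rw [hF, hG, hT, Finset.sum_mul_sum, Finset.sum_mul]
      refine Finset.sum_congr rfl fun x _ => ?_
      rw [Finset.sum_mul]
      refine Finset.sum_congr rfl fun z _ => ?_
      rw [Finset.mul_sum]
      refine Finset.sum_congr rfl fun y _ => ?_
      have hE : eN (b * x) * (eN (-(b * z)) * eN (a * pEvalZ Q y + b * pEvalZ P y))
          = eN (a * pEvalZ Q y) * eN (b * (x - z + pEvalZ P y)) := by
        rw [← eN_add, ← eN_add, ← eN_add]
        congr 1
        ring
      calc f₁ x * eN (b * x) * (g₁ z * eN (-(b * z)))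
            * (eN (a * pEvalZ Q y + b * pEvalZ P y) * K y)
          = (f₁ x * g₁ z * K y) *
              (eN (b * x) * (eN (-(b * z)) * eN (a * pEvalZ Q y + b * pEvalZ P y))) := by ring
        _ = (f₁ x * g₁ z * eN (a * pEvalZ Q y) * K y) * eN (b * (x - z + pEvalZ P y)) := by
              rw [hE]; ring
    calc ∑ b : ZMod N, F b * G b * T b
        = ∑ b : ZMod N, ∑ x : ZMod N, ∑ z : ZMod N, ∑ y : ZMod N,
            (f₁ x * g₁ z * eN (a * pEvalZ Q y) * K y) * eN (b * (x - z + pEvalZ P y)) :=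
          Finset.sum_congr rfl fun b _ => step1 b
      _ = ∑ x : ZMod N, ∑ z : ZMod N, ∑ y : ZMod N,
            (f₁ x * g₁ z * eN (a * pEvalZ Q y) * K y) *
              (if x - z + pEvalZ P y = 0 then (N : ℂ) else 0) := by
          rw [Finset.sum_comm]
          refine Finset.sum_congr rfl fun x _ => ?_
          rw [Finset.sum_comm]
          refine Finset.sum_congr rfl fun z _ => ?_
          rw [Finset.sum_comm]
          refine Finset.sum_congr rfl fun y _ => ?_
          rw [← Finset.mul_sum, sum_eN_mul]
      _ = (N : ℂ) * S := by
          rw [hS, Finset.mul_sum]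
          refine Finset.sum_congr rfl fun x _ => ?_
          rw [Finset.sum_comm, Finset.mul_sum]
          refine Finset.sum_congr rfl fun y _ => ?_
          have hiff : ∀ z : ZMod N, (x - z + pEvalZ P y = 0) = (z = x + pEvalZ P y) := by
            intro z
            refine propext ⟨fun h => by linear_combination -h, fun h => by rw [h]; ring⟩
          simp_rw [hiff, mul_ite, mul_zero]
          rw [Finset.sum_ite_eq' Finset.univ (x + pEvalZ P y)]
          simp only [Finset.mem_univ, if_true]
          ring
  -- the sup
  set M : ℝ := ⨆ b : ZMod N, ‖T b / (N : ℂ)‖ with hM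
  have hble : ∀ b : ZMod N, ‖T b / (N : ℂ)‖ ≤ M := by
    intro b
    rw [hM]
    exact le_ciSup (f := fun b : ZMod N => ‖T b / (N : ℂ)‖)
      (Set.Finite.bddAbove (Set.finite_range _)) b
  have hT_le : ∀ b : ZMod N, ‖T b‖ ≤ (N : ℝ) * M := by
    intro b
    have h := hble b
    rw [norm_div, Complex.norm_natCast] at h
    rw [div_le_iff₀ hNR] at h
    linarith
  have hM0 : 0 ≤ M := le_trans (norm_nonneg _) (hble 0)
  -- Cauchy-Schwarz bound
  have hFG : ∑ b : ZMod N, ‖F b‖ * ‖G b‖ ≤ (N : ℝ) ^ 2 := by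
    have hCS := Finset.sum_mul_sq_le_sq_mul_sq Finset.univ
      (fun b : ZMod N => ‖F b‖) (fun b : ZMod N => ‖G b‖)
    have hFsq : ∑ b : ZMod N, ‖F b‖ ^ 2 ≤ (N : ℝ) ^ 2 := parseval_le f₁ hf₁
    have hGsq : ∑ b : ZMod N, ‖G b‖ ^ 2 ≤ (N : ℝ) ^ 2 := by
      have habs : ∀ b : ZMod N, ‖G b‖
          = ‖∑ z : ZMod N, (starRingEnd ℂ) (g₁ z) * eN (b * z)‖ := by
        intro b
        have hc : (starRingEnd ℂ) (G b) = ∑ z : ZMod N, (starRingEnd ℂ) (g₁ z) * eN (b * z) := by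
          rw [hG, map_sum]
          refine Finset.sum_congr rfl fun z _ => ?_
          rw [map_mul, eN_conj, neg_neg]
        rw [← Complex.norm_conj (G b), hc]
      simp_rw [habs]
      exact parseval_le (fun z => (starRingEnd ℂ) (g₁ z))
        (fun z => by rw [Complex.norm_conj]; exact hg₁ z)
    have hRnn : 0 ≤ ∑ b : ZMod N, ‖F b‖ * ‖G b‖ :=
      Finset.sum_nonneg fun b _ => mul_nonneg (norm_nonneg _) (norm_nonneg _)
    have hFnn : 0 ≤ ∑ b : ZMod N, ‖F b‖ ^ 2 :=
      Finset.sum_nonneg fun b _ => sq_nonneg _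
    nlinarith [sq_nonneg ((N : ℝ) ^ 2)]
  -- put it together
  have hrw : S / (N : ℂ) ^ 2 = (∑ b : ZMod N, F b * G b * T b) / (N : ℂ) ^ 3 := by
    rw [key]
    field_simp
  rw [hrw, norm_div]
  have habs3 : ‖(N : ℂ) ^ 3‖ = (N : ℝ) ^ 3 := by
    rw [norm_pow, Complex.norm_natCast]
  rw [habs3, div_le_iff₀ (by positivity)]
  calc ‖∑ b : ZMod N, F b * G b * T b‖
      ≤ ∑ b : ZMod N, ‖F b * G b * T b‖ := norm_sum_le _ _
    _ ≤ ∑ b : ZMod N, ‖F b‖ * ‖G b‖ * ((N : ℝ) * M) := by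
        refine Finset.sum_le_sum fun b _ => ?_
        rw [norm_mul, norm_mul]
        exact mul_le_mul_of_nonneg_left (hT_le b)
          (mul_nonneg (norm_nonneg _) (norm_nonneg _))
    _ = ((N : ℝ) * M) * ∑ b : ZMod N, ‖F b‖ * ‖G b‖ := by
        rw [← Finset.sum_mul, mul_comm]
    _ ≤ ((N : ℝ) * M) * (N : ℝ) ^ 2 := by
        exact mul_le_mul_of_nonneg_left hFG (mul_nonneg hNR.le hM0)
    _ = M * (N : ℝ) ^ 3 := by ring

end
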